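/- Let V be a finite-dimensional right g-module and left g-comodule with action matrices B_j (defined by v^i·X_j = Σ_k (B_j)^i_k v^k) and coaction matrices A^j (defined by ∇(v^i) = Σ_{j,k} (A^j)^i_k X_j ⊗ v^k). Then: (i) the coaction condition holds iff the A^j pairwise commute; (ii) stability holds iff Σ_j A^j B_j = 0; (iii) the anti-Yetter–Drinfeld condition holds iff [B_q, A^j] = Σ_s A^s C^j_{sq} for all j, q; and all three conditions are independent of the choice of basis of g. -/

import Mathlib

open TensorProduct

lemma sayd_extract0 {ι M V : Type} [Fintype ι] [DecidableEq ι] [AddCommGroup M] [Module ℂ M]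
    [AddCommGroup V] [Module ℂ V] (e : Module.Basis ι ℂ M) (w : ι → V)
    (h : ∑ i, e i ⊗ₜ[ℂ] w i = (0 : M ⊗[ℂ] V)) (i : ι) : w i = 0 := by
  have h2 := congrArg ((TensorProduct.lid ℂ V).toLinearMap ∘ₗ
      TensorProduct.map (e.coord i) LinearMap.id) h
  simpa [map_sum, TensorProduct.map_tmul, Module.Basis.coord_apply, Module.Basis.repr_self_apply,
    TensorProduct.lid_tmul, ite_smul, Finset.sum_ite_eq'] using h2

lemma sayd_canon {ι : Type} [Fintype ι] [DecidableEq ι] {M : Type} [AddCommGroup M] [Module ℂ M]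
    (e : Module.Basis ι ℂ M) {n : ℕ} (W U : ι → Matrix (Fin n) (Fin n) ℂ) :
    (∑ i, (TensorProduct.mk ℂ M (Fin n → ℂ) (e i)) ∘ₗ Matrix.toLin' (W i)
      = ∑ i, (TensorProduct.mk ℂ M (Fin n → ℂ) (e i)) ∘ₗ Matrix.toLin' (U i))
    ↔ ∀ i, W i = U i := by
  constructor
  · intro h i
    apply Matrix.toLin'.injective
    apply LinearMap.ext
    intro v
    have hv := congrArg (fun f : (Fin n → ℂ) →ₗ[ℂ] M ⊗[ℂ] (Fin n → ℂ) => f v) h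
    simp only [LinearMap.sum_apply, LinearMap.comp_apply, TensorProduct.mk_apply] at hv
    have h0 : ∑ i, e i ⊗ₜ[ℂ] (Matrix.toLin' (W i) v - Matrix.toLin' (U i) v)
        = (0 : M ⊗[ℂ] (Fin n → ℂ)) := by
      simp only [TensorProduct.tmul_sub, Finset.sum_sub_distrib, hv, sub_self]
    have := sayd_extract0 e _ h0 i
    rwa [sub_eq_zero] at this
  · intro h
    congr 1
    ext i
    rw [h i]

lemma sayd_sum_lie (L : Type) [LieRing L] [LieAlgebra ℂ L] {N : ℕ} (f : Fin N → L) (y : L) :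
    ⁅∑ i, f i, y⁆ = ∑ i, ⁅f i, y⁆ := by
  have h := map_sum (LieAlgebra.ad ℂ L : L →ₗ[ℂ] Module.End ℂ L) f Finset.univ
  calc ⁅∑ i, f i, y⁆ = LieAlgebra.ad ℂ L (∑ i, f i) y := by rw [LieAlgebra.ad_apply]
    _ = ∑ i, ⁅f i, y⁆ := by
        rw [show LieAlgebra.ad ℂ L (∑ i, f i)
            = (LieAlgebra.ad ℂ L : L →ₗ[ℂ] Module.End ℂ L) (∑ i, f i) from rfl, h]
        simp [LieAlgebra.ad_apply]

lemma sayd_lie_sum (L : Type) [LieRing L] [LieAlgebra ℂ L] {N : ℕ} (f : Fin N → L) (y : L) :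
    ⁅y, ∑ i, f i⁆ = ∑ i, ⁅y, f i⁆ := by
  have h := map_sum (LieAlgebra.ad ℂ L y) f Finset.univ
  calc ⁅y, ∑ i, f i⁆ = LieAlgebra.ad ℂ L y (∑ i, f i) := by rw [LieAlgebra.ad_apply]
    _ = ∑ i, ⁅y, f i⁆ := by rw [h]; simp [LieAlgebra.ad_apply]

lemma sayd_moveJ3 {β : Type} [AddCommMonoid β] {N : ℕ} (f : Fin N → Fin N → Fin N → β) :
    ∑ j, ∑ r, ∑ m, f j r m = ∑ r, ∑ m, ∑ j, f j r m := by
  rw [Finset.sum_comm]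
  exact Finset.sum_congr rfl fun r _ => Finset.sum_comm

lemma sayd_moveJ4 {β : Type} [AddCommMonoid β] {N : ℕ} (f : Fin N → Fin N → Fin N → Fin N → β) :
    ∑ j, ∑ l, ∑ r, ∑ m, f j l r m = ∑ l, ∑ r, ∑ m, ∑ j, f j l r m := by
  rw [Finset.sum_comm]
  exact Finset.sum_congr rfl fun l _ => sayd_moveJ3 (fun j r m => f j l r m)

lemma sayd_rot3 {β : Type} [AddCommMonoid β] {N : ℕ} (f : Fin N → Fin N → Fin N → β) :
    ∑ l, ∑ m, ∑ r, f l m r = ∑ r, ∑ l, ∑ m, f l m r := by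
  calc ∑ l, ∑ m, ∑ r, f l m r = ∑ l, ∑ r, ∑ m, f l m r :=
        Finset.sum_congr rfl fun l _ => Finset.sum_comm
    _ = ∑ r, ∑ l, ∑ m, f l m r := Finset.sum_comm
open TensorProduct

lemma SAYD_aux
    (Nn n : ℕ) (L : Type) [LieRing L] [LieAlgebra ℂ L]
    (b : Module.Basis (Fin Nn) ℂ L)
    (C : Fin Nn → Fin Nn → Fin Nn → ℂ)
    (hC : ∀ s q, ⁅b s, b q⁆ = ∑ j, C j s q • b j)
    (A B : Fin Nn → Matrix (Fin n) (Fin n) ℂ)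
    (ρ : L →ₗ[ℂ] Module.End ℂ (Fin n → ℂ))
    (hρ : ∀ j, ρ (b j) = Matrix.toLin' (B j).transpose)
    (co : (Fin n → ℂ) →ₗ[ℂ] L ⊗[ℂ] (Fin n → ℂ))
    (hco : co = ∑ j, (TensorProduct.mk ℂ L (Fin n → ℂ) (b j)) ∘ₗ Matrix.toLin' (A j).transpose)
    (μ : L ⊗[ℂ] (Fin n → ℂ) →ₗ[ℂ] (Fin n → ℂ))
    (hμ : μ = TensorProduct.lift ρ) :
    (((TensorProduct.map ((TensorProduct.comm ℂ L L).toLinearMap) LinearMap.id) ∘ₗ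
        ((TensorProduct.assoc ℂ L L (Fin n → ℂ)).symm.toLinearMap) ∘ₗ
        (TensorProduct.map LinearMap.id co) ∘ₗ co
      = ((TensorProduct.assoc ℂ L L (Fin n → ℂ)).symm.toLinearMap) ∘ₗ
        (TensorProduct.map LinearMap.id co) ∘ₗ co)
      ↔ (∀ j k, A j * A k = A k * A j)) ∧
    ((μ ∘ₗ co = 0) ↔ (∑ j, A j * B j = 0)) ∧
    ((∀ X : L, co ∘ₗ (ρ X)
        = (TensorProduct.map LinearMap.id (ρ X)) ∘ₗ co
          - (TensorProduct.map ((LieAlgebra.ad ℂ L) X) LinearMap.id) ∘ₗ co)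
      ↔ (∀ q j, B q * A j - A j * B q = ∑ s, C j s q • A s)) := by
  refine ⟨?_, ?_, ?_⟩
  · -- (i)
    have hL : (TensorProduct.map ((TensorProduct.comm ℂ L L).toLinearMap) LinearMap.id) ∘ₗ
          ((TensorProduct.assoc ℂ L L (Fin n → ℂ)).symm.toLinearMap) ∘ₗ
          (TensorProduct.map LinearMap.id co) ∘ₗ co
        = ∑ p : Fin Nn × Fin Nn, (TensorProduct.mk ℂ (L ⊗[ℂ] L) (Fin n → ℂ) ((b.tensorProduct b) p))
            ∘ₗ Matrix.toLin' ((A p.2 * A p.1).transpose) := by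
      apply LinearMap.ext; intro v
      simp only [LinearMap.comp_apply, hco, LinearMap.sum_apply, TensorProduct.mk_apply,
        map_sum, TensorProduct.map_tmul, LinearMap.id_coe, id_eq, TensorProduct.tmul_sum,
        TensorProduct.assoc_symm_tmul, TensorProduct.comm_tmul, LinearEquiv.coe_coe,
        Fintype.sum_prod_type, Module.Basis.tensorProduct_apply, Matrix.transpose_mul,
        Matrix.toLin'_mul]
      rw [Finset.sum_comm]
    have hR : ((TensorProduct.assoc ℂ L L (Fin n → ℂ)).symm.toLinearMap) ∘ₗ
          (TensorProduct.map LinearMap.id co) ∘ₗ co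
        = ∑ p : Fin Nn × Fin Nn, (TensorProduct.mk ℂ (L ⊗[ℂ] L) (Fin n → ℂ) ((b.tensorProduct b) p))
            ∘ₗ Matrix.toLin' ((A p.1 * A p.2).transpose) := by
      apply LinearMap.ext; intro v
      simp only [LinearMap.comp_apply, hco, LinearMap.sum_apply, TensorProduct.mk_apply,
        map_sum, TensorProduct.map_tmul, LinearMap.id_coe, id_eq, TensorProduct.tmul_sum,
        TensorProduct.assoc_symm_tmul, LinearEquiv.coe_coe,
        Fintype.sum_prod_type, Module.Basis.tensorProduct_apply, Matrix.transpose_mul,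
        Matrix.toLin'_mul]
    rw [hL, hR, sayd_canon]
    constructor
    · intro h j k
      have := h (k, j)
      simpa using Matrix.transpose_inj.mp this
    · intro h p
      rw [Matrix.transpose_inj]
      exact h p.2 p.1
  · -- (ii)
    have hii : μ ∘ₗ co = Matrix.toLin' (∑ j, A j * B j).transpose := by
      apply LinearMap.ext; intro v
      simp [hμ, hco, LinearMap.sum_apply, TensorProduct.lift.tmul, hρ,
        Matrix.transpose_sum, map_sum, Matrix.transpose_mul, Matrix.toLin'_mul]
    rw [hii]
    constructor
    · intro h
      have h2 : (∑ j, A j * B j).transpose = (0 : Matrix (Fin n) (Fin n) ℂ) :=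
        Matrix.toLin'.injective (by simpa using h)
      exact Matrix.transpose_eq_zero.mp h2
    · intro h; rw [h]; simp
  · -- (iii)
    have hrep : ∀ s q j, (b.repr ⁅b s, b q⁆) j = C j s q := by
      intro s q j
      rw [hC]
      simp [Module.Basis.repr_self_apply, Finset.sum_apply', Finsupp.smul_apply, mul_ite,
        Finsupp.single_apply, Finset.sum_ite_eq, Finset.sum_ite_eq']
    have hskew : ∀ j q s, C j q s = - C j s q := by
      intro j q s
      rw [← hrep q s j, ← hrep s q j, ← lie_skew, map_neg, Finsupp.neg_apply]
    have ht1 : ∀ q, co ∘ₗ ρ (b q) = ∑ j, (TensorProduct.mk ℂ L (Fin n → ℂ) (b j)) ∘ₗ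
        Matrix.toLin' ((B q * A j).transpose) := by
      intro q
      apply LinearMap.ext; intro v
      simp [hco, hρ, Matrix.transpose_mul, Matrix.toLin'_mul]
    have ht2 : ∀ q, (TensorProduct.map LinearMap.id (ρ (b q))) ∘ₗ co
        = ∑ j, (TensorProduct.mk ℂ L (Fin n → ℂ) (b j)) ∘ₗ
        Matrix.toLin' ((A j * B q).transpose) := by
      intro q
      apply LinearMap.ext; intro v
      simp [hco, hρ, Matrix.transpose_mul, Matrix.toLin'_mul, map_sum]
    have ht3 : ∀ q, (TensorProduct.map ((LieAlgebra.ad ℂ L) (b q)) LinearMap.id) ∘ₗ co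
        = ∑ j, (TensorProduct.mk ℂ L (Fin n → ℂ) (b j)) ∘ₗ
        Matrix.toLin' (∑ s, C j q s • (A s).transpose) := by
      intro q
      apply LinearMap.ext; intro v
      simp only [LinearMap.comp_apply, hco, LinearMap.sum_apply, TensorProduct.mk_apply,
        map_sum, TensorProduct.map_tmul, LinearMap.id_coe, id_eq, LieAlgebra.ad_apply,
        hC, TensorProduct.sum_tmul, ← TensorProduct.smul_tmul', TensorProduct.tmul_sum,
        TensorProduct.tmul_smul, map_smul, LinearMap.smul_apply]
      rw [Finset.sum_comm]
    have hbasis : ∀ q, (co ∘ₗ ρ (b q)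
          = (TensorProduct.map LinearMap.id (ρ (b q))) ∘ₗ co
            - (TensorProduct.map ((LieAlgebra.ad ℂ L) (b q)) LinearMap.id) ∘ₗ co)
        ↔ (∀ j, B q * A j - A j * B q = ∑ s, C j s q • A s) := by
      intro q
      have hsplit : (∑ j, (TensorProduct.mk ℂ L (Fin n → ℂ) (b j)) ∘ₗ
            Matrix.toLin' ((A j * B q).transpose))
          - (∑ j, (TensorProduct.mk ℂ L (Fin n → ℂ) (b j)) ∘ₗ
            Matrix.toLin' (∑ s, C j q s • (A s).transpose))
          = ∑ j, (TensorProduct.mk ℂ L (Fin n → ℂ) (b j)) ∘ₗ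
            Matrix.toLin' ((A j * B q).transpose - ∑ s, C j q s • (A s).transpose) := by
        simp only [map_sub, LinearMap.comp_sub]
        exact (Finset.sum_sub_distrib (G := (Fin n → ℂ) →ₗ[ℂ] L ⊗[ℂ] (Fin n → ℂ)) _ _).symm
      rw [ht1 q, ht2 q, ht3 q, hsplit, sayd_canon]
      apply forall_congr'
      intro j
      have hs : (∑ s, C j q s • (A s).transpose)
          = -(∑ s, C j s q • A s).transpose := by
        rw [Matrix.transpose_sum, ← Finset.sum_neg_distrib]
        apply Finset.sum_congr rfl
        intro s _
        rw [hskew j q s, Matrix.transpose_smul, neg_smul]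
      rw [hs, sub_neg_eq_add, ← Matrix.transpose_add, Matrix.transpose_inj]
      exact (sub_eq_iff_eq_add').symm
    constructor
    · intro h q j
      exact (hbasis q).mp (h (b q)) j
    · intro h X
      let Φ : L →ₗ[ℂ] ((Fin n → ℂ) →ₗ[ℂ] L ⊗[ℂ] (Fin n → ℂ)) :=
        ((LinearMap.llcomp ℂ (Fin n → ℂ) (Fin n → ℂ) (L ⊗[ℂ] (Fin n → ℂ))) co ∘ₗ ρ)
        + ((LinearMap.lcomp ℂ (L ⊗[ℂ] (Fin n → ℂ)) co) ∘ₗ (LinearMap.rTensorHom (Fin n → ℂ))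
            ∘ₗ (LieAlgebra.ad ℂ L : L →ₗ[ℂ] Module.End ℂ L))
      let Ψ : L →ₗ[ℂ] ((Fin n → ℂ) →ₗ[ℂ] L ⊗[ℂ] (Fin n → ℂ)) :=
        (LinearMap.lcomp ℂ (L ⊗[ℂ] (Fin n → ℂ)) co) ∘ₗ (LinearMap.lTensorHom L) ∘ₗ ρ
      have hΦ : ∀ Y : L, Φ Y = co ∘ₗ ρ Y
          + (TensorProduct.map ((LieAlgebra.ad ℂ L) Y) LinearMap.id) ∘ₗ co := by
        intro Y
        simp only [Φ, LinearMap.add_apply, LinearMap.comp_apply, LinearMap.llcomp_apply,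
          LinearMap.lcomp_apply, LinearMap.coe_rTensorHom, LieHom.coe_toLinearMap]
        rfl
      have hΨ : ∀ Y : L, Ψ Y = (TensorProduct.map LinearMap.id (ρ Y)) ∘ₗ co := by
        intro Y
        simp only [Ψ, LinearMap.comp_apply, LinearMap.lcomp_apply, LinearMap.coe_lTensorHom]
        rfl
      have hΦΨ : Φ = Ψ := by
        apply b.ext
        intro q
        have hcond := (hbasis q).mpr (h q)
        rw [hΦ, hΨ, hcond]
        abel
      have hX : Φ X = Ψ X := by rw [hΦΨ]
      rw [hΦ X, hΨ X] at hX
      rw [← hX]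
      abel

/-- For a finite dimensional right `g`-module and left `g`-comodule `V` with
action matrices `B_j` (`v^i·X_j = Σ_k (B_j)^i_k v^k`) and coaction matrices `A^j`
(`∇(v^i) = Σ_{j,k} (A^j)^i_k X_j ⊗ v^k`):
(i) the coaction condition holds iff the `A^j` pairwise commute;
(ii) stability holds iff `Σ_j A^j B_j = 0`;
(iii) the AYD condition holds iff `[B_q, A^j] = Σ_s A^s C^j_{sq}`;
and all three matrix conditions are independent of the choice of basis of `g`. -/
theorem matrix_conditions_for_SAYD
    (Nn n : ℕ) (L : Type) [LieRing L] [LieAlgebra ℂ L]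
    (b : Module.Basis (Fin Nn) ℂ L)
    (C : Fin Nn → Fin Nn → Fin Nn → ℂ)
    (hC : ∀ s q, ⁅b s, b q⁆ = ∑ j, C j s q • b j)
    (A B : Fin Nn → Matrix (Fin n) (Fin n) ℂ)
    -- the right action `ρ X` of `X ∈ g` on `V = ℂⁿ`, determined by the matrices `B_j`:
    (ρ : L →ₗ[ℂ] Module.End ℂ (Fin n → ℂ))
    (hρ : ∀ j, ρ (b j) = Matrix.toLin' (B j).transpose)
    -- the coaction `∇ : V → g ⊗ V`, determined by the matrices `A^j`:
    (co : (Fin n → ℂ) →ₗ[ℂ] L ⊗[ℂ] (Fin n → ℂ))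
    (hco : co = ∑ j, (TensorProduct.mk ℂ L (Fin n → ℂ) (b j)) ∘ₗ Matrix.toLin' (A j).transpose)
    -- the contraction `μ(Y ⊗ v) = v·Y` used to express stability:
    (μ : L ⊗[ℂ] (Fin n → ℂ) →ₗ[ℂ] (Fin n → ℂ))
    (hμ : μ = TensorProduct.lift ρ) :
    -- (i) the coaction condition (symmetry of the two `g`-legs of the iterated coaction):
    (((TensorProduct.map ((TensorProduct.comm ℂ L L).toLinearMap) LinearMap.id) ∘ₗ
        ((TensorProduct.assoc ℂ L L (Fin n → ℂ)).symm.toLinearMap) ∘ₗ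
        (TensorProduct.map LinearMap.id co) ∘ₗ co
      = ((TensorProduct.assoc ℂ L L (Fin n → ℂ)).symm.toLinearMap) ∘ₗ
        (TensorProduct.map LinearMap.id co) ∘ₗ co)
      ↔ (∀ j k, A j * A k = A k * A j)) ∧
    -- (ii) stability `v_{[0]}·v_{[-1]} = 0`:
    ((μ ∘ₗ co = 0) ↔ (∑ j, A j * B j = 0)) ∧
    -- (iii) the AYD condition `∇(v·X) = v_{[-1]} ⊗ v_{[0]}·X + [v_{[-1]}, X] ⊗ v_{[0]}`:
    ((∀ X : L, co ∘ₗ (ρ X)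
        = (TensorProduct.map LinearMap.id (ρ X)) ∘ₗ co
          - (TensorProduct.map ((LieAlgebra.ad ℂ L) X) LinearMap.id) ∘ₗ co)
      ↔ (∀ q j, B q * A j - A j * B q = ∑ s, C j s q • A s)) ∧
    -- basis independence: for any change of basis `Y_j = Σ_l γ^l_j X_l`, the three matrix
    -- conditions hold for the transformed data iff they hold for the original data:
    (∀ γ : Matrix (Fin Nn) (Fin Nn) ℂ, IsUnit γ.det →
      ∀ At Bt : Fin Nn → Matrix (Fin n) (Fin n) ℂ,
      ∀ Ct : Fin Nn → Fin Nn → Fin Nn → ℂ,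
      (∀ q, Bt q = ∑ l, γ l q • B l) →
      (∀ j, At j = ∑ l, γ⁻¹ j l • A l) →
      (∀ j s q, Ct j s q = ∑ l, ∑ r, ∑ m, γ l s * γ m q * C r l m * γ⁻¹ j r) →
      (((∀ j k, At j * At k = At k * At j) ↔ (∀ j k, A j * A k = A k * A j)) ∧
       ((∑ j, At j * Bt j = 0) ↔ (∑ j, A j * B j = 0)) ∧
       ((∀ q j, Bt q * At j - At j * Bt q = ∑ s, Ct j s q • At s)
          ↔ (∀ q j, B q * A j - A j * B q = ∑ s, C j s q • A s)))) := by
  have main := SAYD_aux Nn n L b C hC A B ρ hρ co hco μ hμ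
  refine ⟨main.1, main.2.1, main.2.2, ?_⟩
  intro γ hγ At Bt Ct hBt hAt hCt
  have hinv1 := Matrix.mul_nonsing_inv γ hγ
  have hγ1 : ∀ p r, ∑ j, γ p j * γ⁻¹ j r = if p = r then (1 : ℂ) else 0 := by
    intro p r
    rw [← Matrix.mul_apply, hinv1, Matrix.one_apply]
  -- the transformed basis
  let bt : Module.Basis (Fin Nn) ℂ L := b.map (Matrix.toLinearEquiv b γ hγ)
  have hbt : ∀ j, bt j = ∑ l, γ l j • b l := by
    intro j
    show (b.map (Matrix.toLinearEquiv b γ hγ)) j = _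
    rw [Module.Basis.map_apply, Matrix.toLinearEquiv_apply, Matrix.toLin_self]
  -- recovering `A` from `At`
  have hA : ∀ l, ∑ j, γ l j • At j = A l := by
    intro l
    simp only [hAt, Finset.smul_sum, smul_smul]
    rw [Finset.sum_comm]
    have h1 : ∀ m, ∑ j, (γ l j * γ⁻¹ j m) • A m = (if l = m then (1:ℂ) else 0) • A m := by
      intro m
      rw [← Finset.sum_smul, hγ1]
    rw [Finset.sum_congr rfl fun m _ => h1 m]
    simp [ite_smul, Finset.sum_ite_eq]
  -- transformed action matrices
  have hρt : ∀ q, ρ (bt q) = Matrix.toLin' (Bt q).transpose := by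
    intro q
    rw [hbt q, hBt q]
    simp [hρ, Matrix.transpose_sum, Matrix.transpose_smul, map_sum]
  -- transformed coaction matrices
  have hcot : co = ∑ j, (TensorProduct.mk ℂ L (Fin n → ℂ) (bt j)) ∘ₗ
      Matrix.toLin' (At j).transpose := by
    rw [hco]
    apply LinearMap.ext; intro v
    simp only [LinearMap.sum_apply, LinearMap.comp_apply, TensorProduct.mk_apply]
    have hrhs : ∀ j, bt j ⊗ₜ[ℂ] (Matrix.toLin' (At j).transpose v)
        = ∑ l, γ l j • (b l ⊗ₜ[ℂ] Matrix.toLin' (At j).transpose v) := by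
      intro j
      rw [hbt j, TensorProduct.sum_tmul]
      exact Finset.sum_congr rfl fun l _ => (TensorProduct.smul_tmul' _ _ _).symm
    rw [Finset.sum_congr rfl fun j _ => hrhs j, Finset.sum_comm]
    apply Finset.sum_congr rfl
    intro l _
    rw [← hA l]
    simp [Matrix.transpose_sum, Matrix.transpose_smul, map_sum, map_smul,
      LinearMap.sum_apply, LinearMap.smul_apply, TensorProduct.tmul_sum,
      TensorProduct.tmul_smul]
  -- transformed structure constants
  have hscalar : ∀ r s q, ∑ j, γ r j * Ct j s q = ∑ l, ∑ m, γ l s * γ m q * C r l m := by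
    intro r s q
    calc ∑ j, γ r j * Ct j s q
        = ∑ j, ∑ l, ∑ rr, ∑ m, γ r j * (γ l s * γ m q * C rr l m * γ⁻¹ j rr) := by
          simp only [hCt, Finset.mul_sum]
      _ = ∑ l, ∑ rr, ∑ m, ∑ j, γ r j * (γ l s * γ m q * C rr l m * γ⁻¹ j rr) := sayd_moveJ4 _
      _ = ∑ l, ∑ rr, ∑ m, (γ l s * γ m q * C rr l m) * (if r = rr then (1:ℂ) else 0) := by
          refine Finset.sum_congr rfl fun l _ => Finset.sum_congr rfl fun rr _ =>
            Finset.sum_congr rfl fun m _ => ?_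
          rw [← hγ1 r rr, Finset.mul_sum]
          exact Finset.sum_congr rfl fun j _ => by ring
      _ = ∑ l, ∑ m, γ l s * γ m q * C r l m := by
          refine Finset.sum_congr rfl fun l _ => ?_
          rw [Finset.sum_comm]
          refine Finset.sum_congr rfl fun m _ => ?_
          simp [mul_ite, Finset.sum_ite_eq]
  have hCtt : ∀ s q, ⁅bt s, bt q⁆ = ∑ j, Ct j s q • bt j := by
    intro s q
    have hLHS : ⁅bt s, bt q⁆ = ∑ r, (∑ l, ∑ m, γ l s * γ m q * C r l m) • b r := by
      rw [hbt s, hbt q, sayd_sum_lie]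
      have step : ∀ l, ⁅γ l s • b l, ∑ m, γ m q • b m⁆
          = ∑ m, ∑ r, (γ l s * γ m q * C r l m) • b r := by
        intro l
        rw [smul_lie, sayd_lie_sum, Finset.smul_sum]
        refine Finset.sum_congr rfl fun m _ => ?_
        rw [lie_smul, hC, smul_smul, Finset.smul_sum]
        exact Finset.sum_congr rfl fun r _ => by rw [smul_smul]
      rw [Finset.sum_congr rfl fun l _ => step l, sayd_rot3]
      refine Finset.sum_congr rfl fun r _ => ?_
      calc ∑ l, ∑ m, (γ l s * γ m q * C r l m) • b r
          = ∑ l, (∑ m, γ l s * γ m q * C r l m) • b r :=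
            Finset.sum_congr rfl fun l _ => (Finset.sum_smul).symm
        _ = (∑ l, ∑ m, γ l s * γ m q * C r l m) • b r := (Finset.sum_smul).symm
    have hRHS : ∑ j, Ct j s q • bt j = ∑ r, (∑ j, γ r j * Ct j s q) • b r := by
      calc ∑ j, Ct j s q • bt j = ∑ j, ∑ r, (γ r j * Ct j s q) • b r := by
            refine Finset.sum_congr rfl fun j _ => ?_
            rw [hbt j, Finset.smul_sum]
            exact Finset.sum_congr rfl fun r _ => by rw [smul_smul, mul_comm (Ct j s q)]
        _ = ∑ r, ∑ j, (γ r j * Ct j s q) • b r := Finset.sum_comm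
        _ = ∑ r, (∑ j, γ r j * Ct j s q) • b r :=
            Finset.sum_congr rfl fun r _ => (Finset.sum_smul).symm
    rw [hLHS, hRHS]
    exact Finset.sum_congr rfl fun r _ => by rw [hscalar r s q]
  have main2 := SAYD_aux Nn n L bt Ct hCtt At Bt ρ hρt co hcot μ hμ
  exact ⟨main2.1.symm.trans main.1, main2.2.1.symm.trans main.2.1,
    main2.2.2.symm.trans main.2.2⟩
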